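/- (Zero-field Tutte specialization.) If h(σ) = −J Σ_{{i,j}∈E} δ(σ_i, σ_j) with constant interaction energy J, then Z(G) = q^{k(G)} v^{|V(G)| − k(G)} T(G; (q+v)/v, v+1), where v = e^{βJ} − 1 and T is the Tutte polynomial of G. -/

import Mathlib

open Finset

structure WGraph (S : Type) (L : Type) where
  V : Type
  E : Type
  [fV : Fintype V]
  [dV : DecidableEq V]
  [fE : Fintype E]
  [dE : DecidableEq E]
  ends : E → V × V
  ω : V → S
  γ : E → L

attribute [instance] WGraph.fV WGraph.dV WGraph.fE WGraph.dE

namespace WGraph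
variable {S L : Type}

def IsLoop (G : WGraph S L) (e : G.E) : Prop := (G.ends e).1 = (G.ends e).2

def delete (G : WGraph S L) (e₀ : G.E) : WGraph S L where
  V := G.V
  E := {e : G.E // e ≠ e₀}
  ends := fun e => G.ends e.1
  ω := G.ω
  γ := fun e => G.γ e.1

def contract [Add S] (G : WGraph S L) (e₀ : G.E) (h : ¬ G.IsLoop e₀) : WGraph S L where
  V := {v : G.V // v ≠ (G.ends e₀).2}
  E := {e : G.E // e ≠ e₀}
  ends := fun e =>
    ((if hv : (G.ends e.1).1 = (G.ends e₀).2 then ⟨(G.ends e₀).1, h⟩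
        else ⟨(G.ends e.1).1, hv⟩ : {v : G.V // v ≠ (G.ends e₀).2}),
     (if hv : (G.ends e.1).2 = (G.ends e₀).2 then ⟨(G.ends e₀).1, h⟩
        else ⟨(G.ends e.1).2, hv⟩))
  ω := fun v =>
    if v.1 = (G.ends e₀).1 then G.ω (G.ends e₀).1 + G.ω (G.ends e₀).2 else G.ω v.1
  γ := fun e => G.γ e.1

def mapEdges {L' : Type} (G : WGraph S L) (φ : L → L') : WGraph S L' where
  V := G.V
  E := G.E
  ends := G.ends
  ω := G.ω
  γ := φ ∘ G.γ

def stateGraph (G : WGraph S L) (A : Finset G.E) : SimpleGraph G.V :=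
  SimpleGraph.fromRel (fun v w => ∃ e ∈ A, G.ends e = (v, w))

noncomputable instance (G : WGraph S L) (A : Finset G.E) :
    Fintype (G.stateGraph A).ConnectedComponent := Fintype.ofFinite _

noncomputable def kcomp (G : WGraph S L) (A : Finset G.E) : ℕ :=
  Fintype.card (G.stateGraph A).ConnectedComponent

open scoped Classical in
noncomputable def compWeight [AddCommMonoid S] (G : WGraph S L) (A : Finset G.E)
    (c : (G.stateGraph A).ConnectedComponent) : S :=
  ∑ v ∈ Finset.univ.filter (fun v => (G.stateGraph A).connectedComponentMk v = c), G.ω v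

end WGraph

namespace WGraph
variable {S L : Type} (G : WGraph S L)

lemma reach_const {q : ℕ} {A : Finset G.E} (σ : G.V → Fin q)
    (hσ : ∀ e ∈ A, σ (G.ends e).1 = σ (G.ends e).2) {v w : G.V}
    (h : (G.stateGraph A).Reachable v w) : σ v = σ w := by
  obtain ⟨p⟩ := h
  induction p with
  | nil => rfl
  | @cons x y z h p ih =>
    have hxy : σ x = σ y := by
      rw [stateGraph, SimpleGraph.fromRel_adj] at h
      obtain ⟨-, ⟨e, he, hee⟩ | ⟨e, he, hee⟩⟩ := h
      · have := hσ e he; rw [hee] at this; exact this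
      · have := hσ e he; rw [hee] at this; exact this.symm
    rw [hxy]; exact ih

lemma mk_ends {A : Finset G.E} {e : G.E} (he : e ∈ A) :
    (G.stateGraph A).connectedComponentMk (G.ends e).1 =
    (G.stateGraph A).connectedComponentMk (G.ends e).2 := by
  by_cases h : (G.ends e).1 = (G.ends e).2
  · rw [h]
  · have hadj : (G.stateGraph A).Adj (G.ends e).1 (G.ends e).2 := by
      rw [stateGraph, SimpleGraph.fromRel_adj]
      exact ⟨h, Or.inl ⟨e, he, rfl⟩⟩
    exact SimpleGraph.ConnectedComponent.sound hadj.reachable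

noncomputable def compatEquiv (q : ℕ) (A : Finset G.E) :
    {σ : G.V → Fin q // ∀ e ∈ A, σ (G.ends e).1 = σ (G.ends e).2} ≃
      ((G.stateGraph A).ConnectedComponent → Fin q) where
  toFun σ := SimpleGraph.ConnectedComponent.lift σ.1
    (fun v w p _ => G.reach_const σ.1 σ.2 ⟨p⟩)
  invFun φ := ⟨fun v => φ ((G.stateGraph A).connectedComponentMk v),
    fun e he => congrArg φ (G.mk_ends he)⟩
  left_inv σ := by ext v; simp
  right_inv φ := by
    funext c
    induction c using SimpleGraph.ConnectedComponent.ind with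
    | _ v => simp

lemma card_compat (q : ℕ) (A : Finset G.E) :
    Fintype.card {σ : G.V → Fin q // ∀ e ∈ A, σ (G.ends e).1 = σ (G.ends e).2} =
      q ^ G.kcomp A := by
  classical
  rw [Fintype.card_congr (G.compatEquiv q A), Fintype.card_fun, Fintype.card_fin, kcomp]

lemma kcomp_mono {A B : Finset G.E} (hAB : A ⊆ B) : G.kcomp B ≤ G.kcomp A := by
  have hle : G.stateGraph A ≤ G.stateGraph B := by
    intro v w h
    rw [stateGraph, SimpleGraph.fromRel_adj] at h ⊢
    obtain ⟨hne, ⟨e, he, hee⟩ | ⟨e, he, hee⟩⟩ := h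
    · exact ⟨hne, Or.inl ⟨e, hAB he, hee⟩⟩
    · exact ⟨hne, Or.inr ⟨e, hAB he, hee⟩⟩
  apply Fintype.card_le_of_surjective
    (SimpleGraph.ConnectedComponent.map (SimpleGraph.Hom.ofLE hle))
  intro c
  induction c using SimpleGraph.ConnectedComponent.ind with
  | _ v => exact ⟨(G.stateGraph A).connectedComponentMk v, by simp [SimpleGraph.ConnectedComponent.map_mk]⟩

lemma kcomp_le_card (A : Finset G.E) : G.kcomp A ≤ Fintype.card G.V :=
  Fintype.card_le_of_surjective ((G.stateGraph A).connectedComponentMk)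
    (fun c => c.exists_rep)

lemma kcomp_empty : G.kcomp (∅ : Finset G.E) = Fintype.card G.V := by
  have hinj : Function.Injective ((G.stateGraph (∅ : Finset G.E)).connectedComponentMk) := by
    intro v w h
    obtain ⟨p⟩ := (SimpleGraph.ConnectedComponent.eq).1 h
    cases p with
    | nil => rfl
    | cons h p =>
      rw [stateGraph, SimpleGraph.fromRel_adj] at h
      obtain ⟨-, ⟨e, he, -⟩ | ⟨e, he, -⟩⟩ := h <;> exact absurd he (Finset.notMem_empty e)
  exact (Fintype.card_of_bijective ⟨hinj, fun c => c.exists_rep⟩).symm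

lemma kcomp_insert_ge (e₀ : G.E) (A : Finset G.E) :
    G.kcomp A ≤ G.kcomp (insert e₀ A) + 1 := by
  classical
  have key : ∀ {x y : G.V}, (G.stateGraph (insert e₀ A)).Reachable x y →
      (G.stateGraph A).connectedComponentMk x = (G.stateGraph A).connectedComponentMk y ∨
      (((G.stateGraph A).connectedComponentMk x = (G.stateGraph A).connectedComponentMk (G.ends e₀).1 ∨
        (G.stateGraph A).connectedComponentMk x = (G.stateGraph A).connectedComponentMk (G.ends e₀).2) ∧
       ((G.stateGraph A).connectedComponentMk y = (G.stateGraph A).connectedComponentMk (G.ends e₀).1 ∨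
        (G.stateGraph A).connectedComponentMk y = (G.stateGraph A).connectedComponentMk (G.ends e₀).2)) := by
    intro x y h
    obtain ⟨p⟩ := h
    induction p with
    | nil => exact Or.inl rfl
    | @cons x z y h p ih =>
      have step : (G.stateGraph A).connectedComponentMk x = (G.stateGraph A).connectedComponentMk z ∨
          (((G.stateGraph A).connectedComponentMk x = (G.stateGraph A).connectedComponentMk (G.ends e₀).1 ∨
            (G.stateGraph A).connectedComponentMk x = (G.stateGraph A).connectedComponentMk (G.ends e₀).2) ∧
           ((G.stateGraph A).connectedComponentMk z = (G.stateGraph A).connectedComponentMk (G.ends e₀).1 ∨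
            (G.stateGraph A).connectedComponentMk z = (G.stateGraph A).connectedComponentMk (G.ends e₀).2)) := by
        rw [stateGraph, SimpleGraph.fromRel_adj] at h
        obtain ⟨hne, ⟨e, he, hee⟩ | ⟨e, he, hee⟩⟩ := h
        · rcases Finset.mem_insert.1 he with rfl | he'
          · exact Or.inr ⟨Or.inl (by rw [hee]), Or.inr (by rw [hee])⟩
          · refine Or.inl (SimpleGraph.ConnectedComponent.sound ?_)
            refine SimpleGraph.Adj.reachable ?_
            rw [stateGraph, SimpleGraph.fromRel_adj]
            exact ⟨hne, Or.inl ⟨e, he', hee⟩⟩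
        · rcases Finset.mem_insert.1 he with rfl | he'
          · exact Or.inr ⟨Or.inr (by rw [hee]), Or.inl (by rw [hee])⟩
          · refine Or.inl (SimpleGraph.ConnectedComponent.sound ?_)
            refine SimpleGraph.Adj.reachable ?_
            rw [stateGraph, SimpleGraph.fromRel_adj]
            exact ⟨hne, Or.inr ⟨e, he', hee⟩⟩
      rcases step with h1 | h1
      · rcases ih with h2 | h2
        · exact Or.inl (h1.trans h2)
        · exact Or.inr ⟨h1 ▸ h2.1, h2.2⟩
      · rcases ih with h2 | h2
        · exact Or.inr ⟨h1.1, h2 ▸ h1.2⟩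
        · exact Or.inr ⟨h1.1, h2.2⟩
  have hle : G.stateGraph A ≤ G.stateGraph (insert e₀ A) := by
    intro v v' h
    rw [stateGraph, SimpleGraph.fromRel_adj] at h ⊢
    obtain ⟨hne, ⟨e, he, hee⟩ | ⟨e, he, hee⟩⟩ := h
    · exact ⟨hne, Or.inl ⟨e, Finset.mem_insert_of_mem he, hee⟩⟩
    · exact ⟨hne, Or.inr ⟨e, Finset.mem_insert_of_mem he, hee⟩⟩
  have hginj : Function.Injective
      (fun c : (G.stateGraph A).ConnectedComponent =>
        (if c = (G.stateGraph A).connectedComponentMk (G.ends e₀).2 then Sum.inr ()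
         else Sum.inl (SimpleGraph.ConnectedComponent.map
           (SimpleGraph.Hom.ofLE hle) c) :
          (G.stateGraph (insert e₀ A)).ConnectedComponent ⊕ Unit)) := by
    intro c d
    induction c using SimpleGraph.ConnectedComponent.ind with | _ x => ?_
    induction d using SimpleGraph.ConnectedComponent.ind with | _ y => ?_
    intro hcd
    simp only at hcd
    by_cases hcx : (G.stateGraph A).connectedComponentMk x =
        (G.stateGraph A).connectedComponentMk (G.ends e₀).2
    · by_cases hcy : (G.stateGraph A).connectedComponentMk y =
          (G.stateGraph A).connectedComponentMk (G.ends e₀).2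
      · exact hcx.trans hcy.symm
      · rw [if_pos hcx, if_neg hcy] at hcd; exact absurd hcd (by simp)
    · by_cases hcy : (G.stateGraph A).connectedComponentMk y =
          (G.stateGraph A).connectedComponentMk (G.ends e₀).2
      · rw [if_neg hcx, if_pos hcy] at hcd; exact absurd hcd (by simp)
      · rw [if_neg hcx, if_neg hcy] at hcd
        have hgg := Sum.inl.inj hcd
        simp only [SimpleGraph.ConnectedComponent.map_mk] at hgg
        have hreach : (G.stateGraph (insert e₀ A)).Reachable x y :=
          (SimpleGraph.ConnectedComponent.eq).1 hgg
        rcases key hreach with h | ⟨hx, hy⟩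
        · exact h
        · rcases hx with hx | hx
          · rcases hy with hy | hy
            · exact hx.trans hy.symm
            · exact absurd hy hcy
          · exact absurd hx hcx
  calc G.kcomp A ≤ Fintype.card ((G.stateGraph (insert e₀ A)).ConnectedComponent ⊕ Unit) :=
        Fintype.card_le_of_injective _ hginj
    _ = G.kcomp (insert e₀ A) + 1 := by simp [kcomp]

lemma card_le_kcomp (A : Finset G.E) :
    Fintype.card G.V ≤ A.card + G.kcomp A := by
  classical
  induction A using Finset.induction_on with
  | empty => rw [G.kcomp_empty]; simp
  | @insert e₀ A he ih =>
    have h1 := G.kcomp_insert_ge e₀ A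
    rw [Finset.card_insert_of_notMem he]
    omega

end WGraph


theorem pottsZ_zero_field_eq_Tutte (q : ℕ) (β J : ℂ) (G : WGraph Unit Unit)
    (hv : Complex.exp (β * J) - 1 ≠ 0) :
    (∑ σ : G.V → Fin q, Complex.exp (-β *
        (-(J * ∑ e : G.E, if σ (G.ends e).1 = σ (G.ends e).2 then (1 : ℂ) else 0)))) =
      (q : ℂ) ^ (G.kcomp Finset.univ) *
      (Complex.exp (β * J) - 1) ^ (Fintype.card G.V - G.kcomp Finset.univ) *
      (∑ A : Finset G.E,
        (((q : ℂ) + (Complex.exp (β * J) - 1)) / (Complex.exp (β * J) - 1) - 1) ^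
            (G.kcomp A - G.kcomp Finset.univ) *
          ((Complex.exp (β * J) - 1 + 1) - 1) ^
            (A.card - (Fintype.card G.V - G.kcomp A))) := by
  classical
  set v : ℂ := Complex.exp (β * J) - 1 with hvdef
  -- Step 1: LHS = ∑ A, v^|A| * q^(kcomp A)
  have hL : (∑ σ : G.V → Fin q, Complex.exp (-β *
        (-(J * ∑ e : G.E, if σ (G.ends e).1 = σ (G.ends e).2 then (1 : ℂ) else 0)))) =
      ∑ A : Finset G.E, v ^ A.card * (q : ℂ) ^ G.kcomp A := by
    have hσ : ∀ σ : G.V → Fin q, Complex.exp (-β *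
        (-(J * ∑ e : G.E, if σ (G.ends e).1 = σ (G.ends e).2 then (1 : ℂ) else 0))) =
        ∑ A : Finset G.E, v ^ A.card *
          (if ∀ e ∈ A, σ (G.ends e).1 = σ (G.ends e).2 then (1 : ℂ) else 0) := by
      intro σ
      rw [show -β * (-(J * ∑ e : G.E, if σ (G.ends e).1 = σ (G.ends e).2 then (1 : ℂ) else 0))
          = ∑ e : G.E, (β * J) * (if σ (G.ends e).1 = σ (G.ends e).2 then (1 : ℂ) else 0) by
        rw [← Finset.mul_sum]; ring]
      rw [Complex.exp_sum]
      have hfac : ∀ e : G.E,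
          Complex.exp ((β * J) * (if σ (G.ends e).1 = σ (G.ends e).2 then (1 : ℂ) else 0)) =
          v * (if σ (G.ends e).1 = σ (G.ends e).2 then (1 : ℂ) else 0) + 1 := by
        intro e
        by_cases h : σ (G.ends e).1 = σ (G.ends e).2
        · rw [if_pos h, mul_one, mul_one, hvdef]; ring
        · rw [if_neg h, mul_zero, mul_zero, Complex.exp_zero, zero_add]
      rw [Finset.prod_congr rfl (fun e _ => hfac e), Finset.prod_add]
      rw [Finset.powerset_univ]
      refine Finset.sum_congr rfl (fun A _ => ?_)
      rw [Finset.prod_const_one, mul_one, Finset.prod_mul_distrib, Finset.prod_const,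
        Finset.prod_boole]
      exact congrArg _ (by convert rfl)
    rw [Finset.sum_congr rfl (fun σ _ => hσ σ), Finset.sum_comm]
    refine Finset.sum_congr rfl (fun A _ => ?_)
    rw [← Finset.mul_sum, Finset.sum_boole]
    congr 1
    have hc := G.card_compat q A
    rw [Fintype.card_subtype] at hc
    rw [hc]
    push_cast
    rfl
  rw [hL, Finset.mul_sum]
  refine Finset.sum_congr rfl (fun A _ => ?_)
  -- Step 2: per-term arithmetic
  have hk : G.kcomp (Finset.univ : Finset G.E) ≤ G.kcomp A := G.kcomp_mono (Finset.subset_univ A)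
  have hn : G.kcomp A ≤ Fintype.card G.V := G.kcomp_le_card A
  have hr : Fintype.card G.V ≤ A.card + G.kcomp A := G.card_le_kcomp A
  set k := G.kcomp (Finset.univ : Finset G.E)
  set kA := G.kcomp A
  set n := Fintype.card G.V
  set m := A.card
  have h1 : ((q : ℂ) + v) / v - 1 = (q : ℂ) / v := by field_simp; ring
  have h2 : v + 1 - 1 = v := by ring
  rw [h1, h2, div_pow, div_eq_mul_inv]
  symm
  have hvpow : v ^ (kA - k) ≠ 0 := pow_ne_zero _ hv
  have e1 : (q : ℂ) ^ k * (q : ℂ) ^ (kA - k) = (q : ℂ) ^ kA := by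
    rw [← pow_add]; congr 1; omega
  have e2 : v ^ (n - k) * v ^ (m - (n - kA)) = v ^ m * v ^ (kA - k) := by
    rw [← pow_add, ← pow_add]; congr 1; omega
  calc (q : ℂ) ^ k * v ^ (n - k) *
        ((q : ℂ) ^ (kA - k) * (v ^ (kA - k))⁻¹ * v ^ (m - (n - kA)))
      = ((q : ℂ) ^ k * (q : ℂ) ^ (kA - k)) *
        (v ^ (n - k) * v ^ (m - (n - kA)) * (v ^ (kA - k))⁻¹) := by ring
    _ = (q : ℂ) ^ kA * (v ^ m * v ^ (kA - k) * (v ^ (kA - k))⁻¹) := by rw [e1, e2]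
    _ = (q : ℂ) ^ kA * v ^ m := by rw [mul_assoc, mul_inv_cancel₀ hvpow, mul_one]
    _ = v ^ m * (q : ℂ) ^ kA := by ring
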